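/- Let K = k1/k2 ∈ E(y) be differential-reduced and nonzero. If p ∈ E[y] is nonzero, then k2·D(p) + k1·p ≠ 0; equivalently, K ≠ −D(p)/p for every nonzero polynomial p. -/

import Mathlib

open Polynomial

/-- `K = k1/k2` is differential-reduced: `gcd(k2, k1 - i·D(k2)) = 1` for all integers `i`. -/
def DiffReduced {E : Type*} [Field E] (k1 k2 : E[X]) : Prop :=
  ∀ i : ℤ, IsCoprime k2 (k1 - (i : E[X]) * derivative k2)

/-- The derivation `d/dy` on the field of rational functions `E(y)`. -/
noncomputable def Dr {E : Type*} [Field E] (f : RatFunc E) : RatFunc E :=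
  (algebraMap E[X] (RatFunc E) (derivative f.num) * algebraMap E[X] (RatFunc E) f.denom -
      algebraMap E[X] (RatFunc E) f.num * algebraMap E[X] (RatFunc E) (derivative f.denom)) /
    (algebraMap E[X] (RatFunc E) f.denom) ^ 2

theorem stmt_17 {E : Type*} [Field E] [CharZero E] (k1 k2 : E[X]) (hk1 : k1 ≠ 0)
    (hk2 : k2 ≠ 0) (hcop : IsCoprime k1 k2) (hdr : DiffReduced k1 k2)
    (p : E[X]) (hp : p ≠ 0) :
    k2 * derivative p + k1 * p ≠ 0 := by
  intro h
  -- derivative of p is nonzero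
  have hp' : derivative p ≠ 0 := by
    intro h0
    rw [h0, mul_zero, zero_add] at h
    exact hp ((mul_eq_zero.mp h).resolve_left hk1)
  have hpdeg : p.natDegree ≠ 0 := by
    intro h0
    exact hp' (by rw [eq_C_of_natDegree_eq_zero h0]; simp)
  -- get an irreducible factor q of p
  obtain ⟨q, hqi, hqd⟩ := Polynomial.exists_irreducible_of_natDegree_ne_zero hpdeg
  have hqprime : Prime q := hqi.prime
  have hq0 : q ≠ 0 := hqprime.ne_zero
  have hqdeg : q.natDegree ≠ 0 := hqi.natDegree_pos.ne'
  have hq' : derivative q ≠ 0 := fun h0 => hqdeg (natDegree_eq_zero_of_derivative_eq_zero h0)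
  have hqndq' : ¬ q ∣ derivative q := fun hd =>
    absurd (Polynomial.natDegree_le_of_dvd hd hq') (by
      exact Nat.not_le.mpr (Polynomial.natDegree_derivative_lt hqdeg))
  -- multiplicity decomposition p = q ^ e * s with ¬ q ∣ s
  have hfin : FiniteMultiplicity q p := FiniteMultiplicity.of_prime_left hqprime hp
  obtain ⟨s, hps, hqs⟩ := hfin.exists_eq_pow_mul_and_not_dvd
  have he0 : multiplicity q p ≠ 0 := multiplicity_ne_zero.mpr hqd
  obtain ⟨e', he⟩ : ∃ e', multiplicity q p = e' + 1 :=
    ⟨_, (Nat.succ_pred_eq_of_ne_zero he0).symm⟩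
  rw [he] at hps
  have hcast : ((e' + 1 : ℕ) : E[X]) ≠ 0 := by
    exact_mod_cast (Nat.cast_ne_zero (R := E[X])).mpr (Nat.succ_ne_zero e')
  -- main cancelled equation
  have key : k2 * (((e' + 1 : ℕ) : E[X]) * derivative q * s + q * derivative s)
      + k1 * (q * s) = 0 := by
    have hq' : q ^ e' ≠ 0 := pow_ne_zero _ hq0
    apply mul_left_cancel₀ hq'
    rw [mul_zero]
    calc q ^ e' * (k2 * (((e' + 1 : ℕ) : E[X]) * derivative q * s + q * derivative s)
          + k1 * (q * s))
        = k2 * derivative p + k1 * p := by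
          rw [hps, derivative_mul, derivative_pow]
          simp only [C_eq_natCast, Nat.add_sub_cancel]
          push_cast
          ring
      _ = 0 := h
  -- q divides k2
  have hqk2 : q ∣ k2 := by
    have hdvd : q ∣ k2 * (((e' + 1 : ℕ) : E[X]) * derivative q * s) := by
      refine ⟨-(k2 * derivative s + k1 * s), ?_⟩
      linear_combination key
    rcases hqprime.dvd_or_dvd hdvd with h1 | h1
    · exact h1
    rcases hqprime.dvd_or_dvd h1 with h2 | h2
    · rcases hqprime.dvd_or_dvd h2 with h3 | h3
      · have hle := Polynomial.natDegree_le_of_dvd h3 hcast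
        rw [Polynomial.natDegree_natCast] at hle
        exact (hqdeg (Nat.le_zero.mp hle)).elim
      · exact absurd h3 hqndq'
    · exact absurd h2 hqs
  obtain ⟨u, rfl⟩ := hqk2
  -- cancel one q from key
  have key2 : u * (((e' + 1 : ℕ) : E[X]) * derivative q * s + q * derivative s)
      + k1 * s = 0 := by
    apply mul_left_cancel₀ hq0
    rw [mul_zero]
    linear_combination key
  -- q divides k1 + e * derivative k2
  have hqdvd : q ∣ (k1 + ((e' + 1 : ℕ) : E[X]) * derivative (q * u)) := by
    have : q ∣ (k1 + ((e' + 1 : ℕ) : E[X]) * derivative (q * u)) * s := by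
      refine ⟨((e' + 1 : ℕ) : E[X]) * derivative u * s - u * derivative s, ?_⟩
      rw [derivative_mul]
      linear_combination key2
    exact (hqprime.dvd_or_dvd this).resolve_right hqs
  -- contradiction with differential-reducedness at i = -(e'+1)
  have hco := hdr (-(e' + 1 : ℕ))
  have : k1 - ((-(e' + 1 : ℕ) : ℤ) : E[X]) * derivative (q * u)
      = k1 + ((e' + 1 : ℕ) : E[X]) * derivative (q * u) := by
    push_cast
    ring
  rw [this] at hco
  exact hqi.not_isUnit (hco.isUnit_of_dvd' (dvd_mul_right q u) hqdvd)
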